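/- Let P : M^{1+n} → G_{j,N}(ℂ) be smooth with P² = P. If [P, □P] = 0 and [P, ∂_μ P] ⊗ ∂^μ P + ∂^μ P ⊗ [P, ∂_μ P] = 0 (summed with Minkowski signature), then for every k ≥ 1 the k-fold tensor power satisfies [⊗^k P, □(⊗^k P)] = 0, so the tensor Noether currents [∂_μ(⊗^k P), ⊗^k P] are conserved. -/

import Mathlib

open Matrix Kronecker

attribute [local instance] Matrix.normedAddCommGroup Matrix.normedSpace

/-- The partial derivative `∂_μ` of a function on `(1+n)`-dimensional
Minkowski space `M^{1+n} = Fin (n+1) → ℝ` (coordinate `0` is time). -/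
noncomputable def pd {n : ℕ} {E : Type*} [NormedAddCommGroup E] [NormedSpace ℝ E]
    (μ : Fin (n + 1)) (f : (Fin (n + 1) → ℝ) → E) (x : Fin (n + 1) → ℝ) : E :=
  deriv (fun t : ℝ => f (x + t • (Pi.single μ 1 : Fin (n + 1) → ℝ))) 0

/-- The Minkowski signed sum `Σ'_μ A_μ = A_0 − Σ_{i=1}^n A_i`, implementing
index contraction with the metric `diag(1,−1,…,−1)`. -/
def msum {n : ℕ} {E : Type*} [AddCommGroup E] (A : Fin (n + 1) → E) : E :=
  A 0 - ∑ i ∈ Finset.univ.erase (0 : Fin (n + 1)), A i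

/-- The `k`-fold Kronecker tensor power `⊗^k P` of a square matrix. -/
def tpow {N : ℕ} (k : ℕ) (P : Matrix (Fin N) (Fin N) ℂ) :
    Matrix (Fin k → Fin N) (Fin k → Fin N) ℂ :=
  fun i j => ∏ t : Fin k, P (i t) (j t)

namespace TNaux

variable {n : ℕ}

/-- pd as fderiv -/
lemma pd_eq_fderiv {E : Type*} [NormedAddCommGroup E] [NormedSpace ℝ E]
    {f : (Fin (n + 1) → ℝ) → E} {x : Fin (n + 1) → ℝ} (μ : Fin (n + 1))
    (hf : DifferentiableAt ℝ f x) :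
    pd μ f x = fderiv ℝ f x (Pi.single μ 1) := by
  have hline : HasDerivAt (fun t : ℝ => x + t • (Pi.single μ 1 : Fin (n+1) → ℝ))
      (Pi.single μ 1) 0 := by
    simpa using ((hasDerivAt_id (0:ℝ)).smul_const (Pi.single μ 1 : Fin (n+1) → ℝ)).const_add x
  have hcomp : HasFDerivAt f (fderiv ℝ f x)
      (x + (0:ℝ) • (Pi.single μ 1 : Fin (n+1) → ℝ)) := by
    have hx : x + (0:ℝ) • (Pi.single μ 1 : Fin (n+1) → ℝ) = x := by simp
    rw [hx]; exact hf.hasFDerivAt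
  have := hcomp.comp_hasDerivAt 0 hline
  simpa [pd, Function.comp_def] using this.deriv

lemma pd_sub {E : Type*} [NormedAddCommGroup E] [NormedSpace ℝ E]
    {f g : (Fin (n + 1) → ℝ) → E} {x : Fin (n + 1) → ℝ} (μ : Fin (n + 1))
    (hf : DifferentiableAt ℝ f x) (hg : DifferentiableAt ℝ g x) :
    pd μ (fun y => f y - g y) x = pd μ f x - pd μ g x := by
  rw [pd_eq_fderiv (f := fun y => f y - g y) μ (hf.sub hg), pd_eq_fderiv μ hf, pd_eq_fderiv μ hg, fderiv_fun_sub hf hg]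
  rfl

variable {ι κ : Type*} [Fintype ι] [Fintype κ]

lemma entry_contDiff {g : (Fin (n + 1) → ℝ) → Matrix ι κ ℂ}
    (hg : ContDiff ℝ (⊤:ℕ∞) g) (a : ι) (b : κ) :
    ContDiff ℝ (⊤:ℕ∞) (fun y => g y a b) :=
  contDiff_pi.1 (contDiff_pi.1 hg a) b

lemma matrix_contDiff {g : (Fin (n + 1) → ℝ) → Matrix ι κ ℂ}
    (hg : ∀ a b, ContDiff ℝ (⊤:ℕ∞) (fun y => g y a b)) :
    ContDiff ℝ (⊤:ℕ∞) g :=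
  contDiff_pi.2 fun a => contDiff_pi.2 (hg a)

lemma entry_fderiv {g : (Fin (n + 1) → ℝ) → Matrix ι κ ℂ} {x : Fin (n + 1) → ℝ}
    (hg : DifferentiableAt ℝ g x) (a : ι) (b : κ) (v : Fin (n+1) → ℝ) :
    fderiv ℝ (fun y => g y a b) x v = fderiv ℝ g x v a b := by
  have h1 := hasFDerivAt_pi'.1 hg.hasFDerivAt a
  have h2 := hasFDerivAt_pi'.1 h1 b
  rw [h2.fderiv]
  rfl

lemma pd_entry {g : (Fin (n + 1) → ℝ) → Matrix ι κ ℂ} {x : Fin (n + 1) → ℝ}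
    (hg : DifferentiableAt ℝ g x) (μ : Fin (n+1)) (a : ι) (b : κ) :
    pd μ g x a b = fderiv ℝ (fun y => g y a b) x (Pi.single μ 1) := by
  rw [pd_eq_fderiv μ hg, entry_fderiv hg]
  rfl

/-- the derivative function of a smooth matrix-valued map, and its smoothness -/
lemma pd_eq_fun {g : (Fin (n + 1) → ℝ) → Matrix ι κ ℂ}
    (hg : ContDiff ℝ (⊤:ℕ∞) g) (μ : Fin (n+1)) :
    pd μ g = fun y => fderiv ℝ g y (Pi.single μ 1) := by
  funext y
  exact pd_eq_fderiv μ (hg.differentiable (by simp)).differentiableAt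

lemma pd_contDiff {g : (Fin (n + 1) → ℝ) → Matrix ι κ ℂ}
    (hg : ContDiff ℝ (⊤:ℕ∞) g) (μ : Fin (n+1)) :
    ContDiff ℝ (⊤:ℕ∞) (pd μ g) := by
  rw [pd_eq_fun hg μ]
  exact (hg.fderiv_right (by simp)).clm_apply contDiff_const

lemma d1_contDiff {f : (Fin (n + 1) → ℝ) → ℂ}
    (hf : ContDiff ℝ (⊤:ℕ∞) f) (μ : Fin (n+1)) :
    ContDiff ℝ (⊤:ℕ∞) (fun y => fderiv ℝ f y (Pi.single μ 1)) :=
  (hf.fderiv_right (by simp)).clm_apply contDiff_const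

/-- second derivative entry formula -/
lemma pd_pd_entry {g : (Fin (n + 1) → ℝ) → Matrix ι κ ℂ} {x : Fin (n + 1) → ℝ}
    (hg : ContDiff ℝ (⊤:ℕ∞) g) (μ : Fin (n+1)) (a : ι) (b : κ) :
    pd μ (pd μ g) x a b =
      fderiv ℝ (fun y => fderiv ℝ (fun z => g z a b) y (Pi.single μ 1)) x (Pi.single μ 1) := by
  have hpd : ContDiff ℝ (⊤:ℕ∞) (pd μ g) := pd_contDiff hg μ
  rw [pd_entry (hpd.differentiable (by simp)).differentiableAt μ a b,
    show (fun y => pd μ g y a b) =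
        (fun y => fderiv ℝ (fun z => g z a b) y (Pi.single μ 1)) from
      funext fun y => pd_entry ((hg.differentiable (by simp)).differentiableAt) μ a b]



/-! ### msum lemmas -/

lemma msum_congr {n : ℕ} {E : Type*} [AddCommGroup E] {A B : Fin (n+1) → E}
    (h : ∀ μ, A μ = B μ) : msum A = msum B := by
  have : A = B := funext h
  rw [this]

lemma msum_sub {n : ℕ} {E : Type*} [AddCommGroup E] (f g : Fin (n+1) → E) :
    msum (fun μ => f μ - g μ) = msum f - msum g := by
  simp only [msum, Finset.sum_sub_distrib]
  abel

lemma msum_add {n : ℕ} {E : Type*} [AddCommGroup E] (f g : Fin (n+1) → E) :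
    msum (fun μ => f μ + g μ) = msum f + msum g := by
  simp only [msum, Finset.sum_add_distrib]
  abel

lemma msum_mul_const {n : ℕ} (f : Fin (n+1) → ℂ) (c : ℂ) :
    msum (fun μ => f μ * c) = msum f * c := by
  simp [msum, sub_mul, Finset.sum_mul]

lemma msum_entry {n : ℕ} {ι κ : Type*} (A : Fin (n+1) → Matrix ι κ ℂ) (i : ι) (j : κ) :
    msum A i j = msum (fun μ => A μ i j) := by
  simp [msum, Matrix.sub_apply, Matrix.sum_apply]

lemma mul_msum {n : ℕ} {ι : Type*} [Fintype ι] (M : Matrix ι ι ℂ) (A : Fin (n+1) → Matrix ι ι ℂ) :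
    M * msum A = msum (fun μ => M * A μ) := by
  simp [msum, Matrix.mul_sub, Finset.mul_sum]

lemma msum_mul {n : ℕ} {ι : Type*} [Fintype ι] (M : Matrix ι ι ℂ) (A : Fin (n+1) → Matrix ι ι ℂ) :
    msum A * M = msum (fun μ => A μ * M) := by
  simp [msum, Matrix.sub_mul, Finset.sum_mul]

lemma sum_msum {n : ℕ} {E : Type*} [AddCommGroup E] {α : Type*} (s : Finset α)
    (f : α → Fin (n+1) → E) :
    ∑ t ∈ s, msum (f t) = msum (fun μ => ∑ t ∈ s, f t μ) := by
  simp only [msum, Finset.sum_sub_distrib]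
  rw [Finset.sum_comm]

/-! ### slot matrices -/

variable {N k : ℕ}

def slot (A : Fin k → Matrix (Fin N) (Fin N) ℂ) :
    Matrix (Fin k → Fin N) (Fin k → Fin N) ℂ :=
  fun i j => ∏ t : Fin k, A t (i t) (j t)

lemma tpow_eq_slot (M : Matrix (Fin N) (Fin N) ℂ) : tpow k M = slot (fun _ => M) := rfl

lemma slot_mul (A B : Fin k → Matrix (Fin N) (Fin N) ℂ) :
    slot A * slot B = slot (fun t => A t * B t) := by
  ext i j
  simp only [Matrix.mul_apply, slot]
  rw [Finset.prod_univ_sum, Fintype.piFinset_univ]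
  exact Finset.sum_congr rfl fun l _ => (Finset.prod_mul_distrib).symm

lemma slot_update_apply (M : Matrix (Fin N) (Fin N) ℂ) (t : Fin k)
    (X : Matrix (Fin N) (Fin N) ℂ) (i j : Fin k → Fin N) :
    slot (Function.update (fun _ => M) t X) i j =
      X (i t) (j t) * ∏ r ∈ Finset.univ.erase t, M (i r) (j r) := by
  show (∏ s : Fin k, Function.update (fun _ => M) t X s (i s) (j s)) = _
  rw [← Finset.mul_prod_erase _ _ (Finset.mem_univ t)]
  rw [Function.update_self]
  congr 1
  refine Finset.prod_congr rfl fun r hr => ?_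
  rw [Function.update_of_ne (Finset.ne_of_mem_erase hr)]

lemma slot_update2_apply (M : Matrix (Fin N) (Fin N) ℂ) {t s : Fin k} (hst : s ≠ t)
    (X Y : Matrix (Fin N) (Fin N) ℂ) (i j : Fin k → Fin N) :
    slot (Function.update (Function.update (fun _ => M) t X) s Y) i j =
      X (i t) (j t) * (Y (i s) (j s) *
        ∏ r ∈ (Finset.univ.erase t).erase s, M (i r) (j r)) := by
  show (∏ r : Fin k, Function.update (Function.update (fun _ => M) t X) s Y r (i r) (j r)) = _
  rw [← Finset.mul_prod_erase _ _ (Finset.mem_univ t),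
    ← Finset.mul_prod_erase _ _ (Finset.mem_erase.2 ⟨hst, Finset.mem_univ s⟩)]
  rw [Function.update_of_ne (Ne.symm hst), Function.update_self, Function.update_self]
  congr 1
  congr 1
  refine Finset.prod_congr rfl fun r hr => ?_
  have hrs : r ≠ s := Finset.ne_of_mem_erase hr
  have hrt : r ≠ t := Finset.ne_of_mem_erase (Finset.mem_of_mem_erase hr)
  rw [Function.update_of_ne hrs, Function.update_of_ne hrt]

lemma slot_zero (c : Fin k → Matrix (Fin N) (Fin N) ℂ) (t : Fin k)
    (h : c t = 0) : slot c = 0 := by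
  ext i j
  show (∏ r : Fin k, c r (i r) (j r)) = 0
  rw [← Finset.mul_prod_erase _ _ (Finset.mem_univ t), h]
  simp



section Calc

variable {n N : ℕ} {P : (Fin (n+1) → ℝ) → Matrix (Fin N) (Fin N) ℂ}

lemma tpow_contDiff (hP : ContDiff ℝ (⊤:ℕ∞) P) (k : ℕ) :
    ContDiff ℝ (⊤:ℕ∞) (fun y => tpow k (P y)) := by
  refine matrix_contDiff fun i j => ?_
  show ContDiff ℝ (⊤:ℕ∞) (fun y => ∏ t : Fin k, P y (i t) (j t))
  exact contDiff_prod fun t _ => entry_contDiff hP _ _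

lemma mul_contDiff {ι : Type*} [Fintype ι] [DecidableEq ι]
    {f g : (Fin (n+1) → ℝ) → Matrix ι ι ℂ}
    (hf : ContDiff ℝ (⊤:ℕ∞) f) (hg : ContDiff ℝ (⊤:ℕ∞) g) :
    ContDiff ℝ (⊤:ℕ∞) (fun y => f y * g y) := by
  refine matrix_contDiff fun a b => ?_
  have : (fun y => (f y * g y) a b) = fun y => ∑ l, f y a l * g y l b := by
    funext y; rw [Matrix.mul_apply]
  rw [this]
  exact ContDiff.sum fun l _ => (entry_contDiff hf a l).mul (entry_contDiff hg l b)

lemma pd_mul {ι : Type*} [Fintype ι] [DecidableEq ι]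
    {f g : (Fin (n+1) → ℝ) → Matrix ι ι ℂ}
    (hf : ContDiff ℝ (⊤:ℕ∞) f) (hg : ContDiff ℝ (⊤:ℕ∞) g)
    (μ : Fin (n+1)) (x : Fin (n+1) → ℝ) :
    pd μ (fun y => f y * g y) x = pd μ f x * g x + f x * pd μ g x := by
  have hfg := mul_contDiff hf hg
  ext a b
  rw [pd_entry ((hfg.differentiable (by simp)).differentiableAt) μ a b]
  have h1 : (fun y => (f y * g y) a b) = fun y => ∑ l, f y a l * g y l b := by
    funext y; rw [Matrix.mul_apply]
  rw [h1]
  have hdf : ∀ (a : ι) (b : ι) (y : Fin (n+1) → ℝ),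
      DifferentiableAt ℝ (fun z => f z a b) y := fun a b y =>
    ((entry_contDiff hf a b).differentiable (by simp)).differentiableAt
  have hdg : ∀ (a : ι) (b : ι) (y : Fin (n+1) → ℝ),
      DifferentiableAt ℝ (fun z => g z a b) y := fun a b y =>
    ((entry_contDiff hg a b).differentiable (by simp)).differentiableAt
  rw [fderiv_fun_sum (A := fun l y => f y a l * g y l b) (fun l _ => ((hdf a l x).mul (hdg l b x)))]
  simp only [ContinuousLinearMap.coe_sum', Finset.sum_apply]
  rw [Matrix.add_apply, Matrix.mul_apply, Matrix.mul_apply]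
  rw [← Finset.sum_add_distrib]
  refine Finset.sum_congr rfl fun l _ => ?_
  rw [fderiv_fun_mul (hdf a l x) (hdg l b x)]
  rw [pd_entry ((hf.differentiable (by simp)).differentiableAt) μ a l,
    pd_entry ((hg.differentiable (by simp)).differentiableAt) μ l b]
  simp only [ContinuousLinearMap.add_apply, ContinuousLinearMap.smul_apply, smul_eq_mul]
  ring

lemma fderiv_tpow_entry (hP : ContDiff ℝ (⊤:ℕ∞) P) (k : ℕ) (μ : Fin (n+1))
    (i j : Fin k → Fin N) (y : Fin (n+1) → ℝ) :
    fderiv ℝ (fun z => tpow k (P z) i j) y (Pi.single μ 1)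
      = ∑ t : Fin k, (∏ r ∈ Finset.univ.erase t, P y (i r) (j r)) *
          fderiv ℝ (fun z => P z (i t) (j t)) y (Pi.single μ 1) := by
  have h : (fun z => tpow k (P z) i j) = fun z => ∏ t : Fin k, P z (i t) (j t) := rfl
  rw [h]
  rw [fderiv_finset_prod (u := Finset.univ) (g := fun t z => P z (i t) (j t))
    (fun t _ => ((entry_contDiff hP (i t) (j t)).differentiable (by simp)).differentiableAt)]
  simp only [ContinuousLinearMap.coe_sum', Finset.sum_apply, ContinuousLinearMap.smul_apply,
    smul_eq_mul]


lemma M2 (hP : ContDiff ℝ (⊤:ℕ∞) P) (k : ℕ) (μ : Fin (n+1)) (x : Fin (n+1) → ℝ) :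
    pd μ (pd μ (fun y => tpow k (P y))) x
      = (∑ t : Fin k, slot (Function.update (fun _ => P x) t (pd μ (pd μ P) x)))
        + ∑ t : Fin k, ∑ s ∈ Finset.univ.erase t,
            slot (Function.update (Function.update (fun _ => P x) t (pd μ P x)) s (pd μ P x)) := by
  have hQ := tpow_contDiff hP k
  have hpdQ : ContDiff ℝ (⊤:ℕ∞) (pd μ (fun y => tpow k (P y))) := pd_contDiff hQ μ
  have hde : ∀ (a b : Fin N), ContDiff ℝ (⊤:ℕ∞) (fun z => P z a b) :=
    fun a b => entry_contDiff hP a b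
  have hd1 : ∀ (a b : Fin N),
      ContDiff ℝ (⊤:ℕ∞) (fun y => fderiv ℝ (fun z => P z a b) y (Pi.single μ 1)) :=
    fun a b => d1_contDiff (hde a b) μ
  ext i j
  rw [pd_entry ((hpdQ.differentiable (by simp)).differentiableAt) μ i j]
  have hrw : (fun y => pd μ (fun z => tpow k (P z)) y i j)
      = fun y => ∑ t : Fin k, (∏ r ∈ Finset.univ.erase t, P y (i r) (j r)) *
          fderiv ℝ (fun z => P z (i t) (j t)) y (Pi.single μ 1) := by
    funext y
    rw [pd_entry ((hQ.differentiable (by simp)).differentiableAt) μ i j,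
      fderiv_tpow_entry hP k μ i j y]
  rw [hrw]
  have hprod : ∀ (t : Fin k),
      ContDiff ℝ (⊤:ℕ∞) (fun y => ∏ r ∈ Finset.univ.erase t, P y (i r) (j r)) :=
    fun t => contDiff_prod fun r _ => hde _ _
  rw [fderiv_fun_sum (A := fun t y => (∏ r ∈ Finset.univ.erase t, P y (i r) (j r)) *
      fderiv ℝ (fun z => P z (i t) (j t)) y (Pi.single μ 1)) (fun t _ =>
    ((((hprod t).mul (hd1 (i t) (j t)))).differentiable (by simp)).differentiableAt)]
  simp only [ContinuousLinearMap.coe_sum', Finset.sum_apply]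
  rw [Matrix.add_apply]
  simp only [Matrix.sum_apply]
  rw [← Finset.sum_add_distrib]
  refine Finset.sum_congr rfl fun t _ => ?_
  rw [fderiv_fun_mul (((hprod t).differentiable (by simp)).differentiableAt)
    (((hd1 (i t) (j t)).differentiable (by simp)).differentiableAt)]
  rw [fderiv_finset_prod (u := Finset.univ.erase t) (g := fun r z => P z (i r) (j r))
    (fun r _ => ((hde (i r) (j r)).differentiable (by simp)).differentiableAt)]
  simp only [ContinuousLinearMap.add_apply, ContinuousLinearMap.smul_apply, smul_eq_mul,
    ContinuousLinearMap.coe_sum', Finset.sum_apply]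
  rw [slot_update_apply]
  have hslot2 : ∀ s ∈ Finset.univ.erase t,
      slot (Function.update (Function.update (fun _ => P x) t (pd μ P x)) s (pd μ P x)) i j
        = pd μ P x (i t) (j t) * (pd μ P x (i s) (j s) *
            ∏ r ∈ (Finset.univ.erase t).erase s, P x (i r) (j r)) :=
    fun s hs => slot_update2_apply (P x) (Finset.ne_of_mem_erase hs) _ _ i j
  rw [Finset.sum_congr rfl hslot2]
  have hPd : ∀ (a b : Fin N), pd μ P x a b = fderiv ℝ (fun z => P z a b) x (Pi.single μ 1) :=
    fun a b => pd_entry ((hP.differentiable (by simp)).differentiableAt) μ a b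
  have hPdd : ∀ (a b : Fin N), pd μ (pd μ P) x a b
      = fderiv ℝ (fun y => fderiv ℝ (fun z => P z a b) y (Pi.single μ 1)) x (Pi.single μ 1) :=
    fun a b => pd_pd_entry hP μ a b
  simp only [hPd, hPdd]
  rw [Finset.mul_sum]
  congr 1
  · ring
  · exact Finset.sum_congr rfl fun s _ => by ring

end Calc

end TNaux

/-- If a smooth map `P` into projection matrices satisfies `[P, □P] = 0` and
`Σ'_μ ([P, ∂_μ P] ⊗ ∂_μ P + ∂_μ P ⊗ [P, ∂_μ P]) = 0`, then for every `k ≥ 1`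
the tensor power satisfies `[⊗^k P, □(⊗^k P)] = 0`, so the tensor Noether
currents `[∂_μ(⊗^k P), ⊗^k P]` are conserved. -/
theorem tensor_noether_conservation {n N : ℕ}
    (P : (Fin (n + 1) → ℝ) → Matrix (Fin N) (Fin N) ℂ)
    (hP : ContDiff ℝ (⊤ : ℕ∞) P)
    (hproj : ∀ x, P x * P x = P x)
    (heom : ∀ x, P x * msum (fun μ => pd μ (pd μ P) x) -
        msum (fun μ => pd μ (pd μ P) x) * P x = 0)
    (hsub : ∀ x, msum (fun μ =>
        (P x * pd μ P x - pd μ P x * P x) ⊗ₖ pd μ P x +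
          pd μ P x ⊗ₖ (P x * pd μ P x - pd μ P x * P x)) = 0) :
    ∀ k : ℕ, 1 ≤ k → ∀ x,
      (tpow k (P x) * msum (fun μ => pd μ (pd μ (fun y => tpow k (P y))) x) -
          msum (fun μ => pd μ (pd μ (fun y => tpow k (P y))) x) * tpow k (P x) = 0) ∧
      msum (fun μ => pd μ (fun y =>
          pd μ (fun y' => tpow k (P y')) y * tpow k (P y) -
            tpow k (P y) * pd μ (fun y' => tpow k (P y')) y) x) = 0 := by
  intro k hk x
  have hQ : ContDiff ℝ (⊤:ℕ∞) (fun y => tpow k (P y)) := TNaux.tpow_contDiff hP k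
  have hadd : ∀ (μ : Fin (n+1)) (y : Fin (n+1) → ℝ),
      pd μ P y = P y * pd μ P y + pd μ P y * P y := by
    intro μ y
    have h0 := TNaux.pd_mul hP hP μ y
    have h1 : (fun z => P z * P z) = P := funext hproj
    rw [h1] at h0
    exact h0.trans (add_comm _ _)
  -- claim 1 : single-slot terms vanish
  have claim1 : ∀ t : Fin k,
      msum (fun μ =>
        tpow k (P x) * TNaux.slot (Function.update (fun _ => P x) t (pd μ (pd μ P) x))
        - TNaux.slot (Function.update (fun _ => P x) t (pd μ (pd μ P) x)) * tpow k (P x)) = 0 := by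
    intro t
    have e : ∀ μ : Fin (n+1),
        tpow k (P x) * TNaux.slot (Function.update (fun _ => P x) t (pd μ (pd μ P) x))
        - TNaux.slot (Function.update (fun _ => P x) t (pd μ (pd μ P) x)) * tpow k (P x)
        = TNaux.slot (Function.update (fun _ => P x) t (P x * pd μ (pd μ P) x))
          - TNaux.slot (Function.update (fun _ => P x) t (pd μ (pd μ P) x * P x)) := by
      intro μ
      rw [TNaux.tpow_eq_slot, TNaux.slot_mul, TNaux.slot_mul]
      refine congrArg₂ (· - ·) (congrArg TNaux.slot ?_) (congrArg TNaux.slot ?_)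
      · funext r
        by_cases h : r = t
        · subst h; simp
        · simp [Function.update_of_ne h, hproj x]
      · funext r
        by_cases h : r = t
        · subst h; simp
        · simp [Function.update_of_ne h, hproj x]
    rw [TNaux.msum_congr e]
    ext i j
    rw [TNaux.msum_entry]
    have e2 : ∀ μ : Fin (n+1),
        (TNaux.slot (Function.update (fun _ => P x) t (P x * pd μ (pd μ P) x))
          - TNaux.slot (Function.update (fun _ => P x) t (pd μ (pd μ P) x * P x))) i j
        = ((P x * pd μ (pd μ P) x - pd μ (pd μ P) x * P x) (i t) (j t)) *
            ∏ r ∈ Finset.univ.erase t, P x (i r) (j r) := by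
      intro μ
      rw [Matrix.sub_apply, TNaux.slot_update_apply, TNaux.slot_update_apply,
        Matrix.sub_apply, sub_mul]
    rw [TNaux.msum_congr e2, TNaux.msum_mul_const, ← TNaux.msum_entry]
    have e3 : msum (fun μ => P x * pd μ (pd μ P) x - pd μ (pd μ P) x * P x)
        = (0 : Matrix (Fin N) (Fin N) ℂ) := by
      rw [TNaux.msum_sub, ← TNaux.mul_msum, ← TNaux.msum_mul]
      exact heom x
    rw [e3]
    simp
  -- claim 2 : double-slot terms vanish
  have claim2 : ∀ t : Fin k, ∀ s ∈ Finset.univ.erase t,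
      msum (fun μ =>
        tpow k (P x) * TNaux.slot (Function.update
          (Function.update (fun _ => P x) t (pd μ P x)) s (pd μ P x))
        - TNaux.slot (Function.update
          (Function.update (fun _ => P x) t (pd μ P x)) s (pd μ P x)) * tpow k (P x)) = 0 := by
    intro t s hs
    have hst : s ≠ t := Finset.ne_of_mem_erase hs
    have e : ∀ μ : Fin (n+1),
        tpow k (P x) * TNaux.slot (Function.update
          (Function.update (fun _ => P x) t (pd μ P x)) s (pd μ P x))
        - TNaux.slot (Function.update
          (Function.update (fun _ => P x) t (pd μ P x)) s (pd μ P x)) * tpow k (P x)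
        = TNaux.slot (Function.update
            (Function.update (fun _ => P x) t (P x * pd μ P x)) s (P x * pd μ P x))
          - TNaux.slot (Function.update
            (Function.update (fun _ => P x) t (pd μ P x * P x)) s (pd μ P x * P x)) := by
      intro μ
      rw [TNaux.tpow_eq_slot, TNaux.slot_mul, TNaux.slot_mul]
      refine congrArg₂ (· - ·) (congrArg TNaux.slot ?_) (congrArg TNaux.slot ?_)
      · funext r
        by_cases h1 : r = s
        · subst h1; simp
        · by_cases h2 : r = t
          · subst h2
            simp [Function.update_of_ne h1]
          · simp [Function.update_of_ne h1, Function.update_of_ne h2, hproj x]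
      · funext r
        by_cases h1 : r = s
        · subst h1; simp
        · by_cases h2 : r = t
          · subst h2
            simp [Function.update_of_ne h1]
          · simp [Function.update_of_ne h1, Function.update_of_ne h2, hproj x]
    rw [TNaux.msum_congr e]
    ext i j
    rw [TNaux.msum_entry]
    have e2 : ∀ μ : Fin (n+1),
        (TNaux.slot (Function.update
            (Function.update (fun _ => P x) t (P x * pd μ P x)) s (P x * pd μ P x))
          - TNaux.slot (Function.update
            (Function.update (fun _ => P x) t (pd μ P x * P x)) s (pd μ P x * P x))) i j
        = ((P x * pd μ P x - pd μ P x * P x) (i t) (j t) * pd μ P x (i s) (j s)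
            + pd μ P x (i t) (j t) * (P x * pd μ P x - pd μ P x * P x) (i s) (j s))
          * (2⁻¹ * ∏ r ∈ (Finset.univ.erase t).erase s, P x (i r) (j r)) := by
      intro μ
      rw [Matrix.sub_apply, TNaux.slot_update2_apply (P x) hst,
        TNaux.slot_update2_apply (P x) hst]
      have h1 := congrFun (congrFun (hadd μ x) (i t)) (j t)
      have h2 := congrFun (congrFun (hadd μ x) (i s)) (j s)
      rw [Matrix.add_apply] at h1 h2
      simp only [Matrix.sub_apply]
      rw [h1, h2]
      ring
    rw [TNaux.msum_congr e2, TNaux.msum_mul_const]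
    have hsubE := congrFun (congrFun (hsub x) (i t, i s)) (j t, j s)
    rw [TNaux.msum_entry] at hsubE
    simp only [Matrix.add_apply, Matrix.kroneckerMap_apply, Matrix.zero_apply] at hsubE
    rw [hsubE]
    simp
  -- part 1
  have part1 : tpow k (P x) * msum (fun μ => pd μ (pd μ (fun y => tpow k (P y))) x) -
      msum (fun μ => pd μ (pd μ (fun y => tpow k (P y))) x) * tpow k (P x) = 0 := by
    rw [TNaux.mul_msum, TNaux.msum_mul, ← TNaux.msum_sub]
    have key : ∀ μ : Fin (n+1),
        tpow k (P x) * pd μ (pd μ (fun y => tpow k (P y))) x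
          - pd μ (pd μ (fun y => tpow k (P y))) x * tpow k (P x)
        = (∑ t : Fin k,
            (tpow k (P x) * TNaux.slot (Function.update (fun _ => P x) t (pd μ (pd μ P) x))
             - TNaux.slot (Function.update (fun _ => P x) t (pd μ (pd μ P) x)) * tpow k (P x)))
          + ∑ t : Fin k, ∑ s ∈ Finset.univ.erase t,
            (tpow k (P x) * TNaux.slot (Function.update
              (Function.update (fun _ => P x) t (pd μ P x)) s (pd μ P x))
             - TNaux.slot (Function.update
              (Function.update (fun _ => P x) t (pd μ P x)) s (pd μ P x)) * tpow k (P x)) := by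
      intro μ
      rw [TNaux.M2 hP k μ x]
      rw [Matrix.mul_add, Matrix.add_mul, Matrix.mul_sum, Matrix.sum_mul,
        Matrix.mul_sum, Matrix.sum_mul]
      rw [← sub_add_sub_comm]
      rw [← Finset.sum_sub_distrib, ← Finset.sum_sub_distrib]
      congr 1
      refine Finset.sum_congr rfl fun t _ => ?_
      rw [Matrix.mul_sum, Matrix.sum_mul, ← Finset.sum_sub_distrib]
    rw [TNaux.msum_congr key, TNaux.msum_add, ← TNaux.sum_msum, ← TNaux.sum_msum]
    rw [Finset.sum_congr rfl (fun t _ => claim1 t)]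
    have : ∀ t : Fin k, msum (fun μ => ∑ s ∈ Finset.univ.erase t,
        (tpow k (P x) * TNaux.slot (Function.update
          (Function.update (fun _ => P x) t (pd μ P x)) s (pd μ P x))
         - TNaux.slot (Function.update
          (Function.update (fun _ => P x) t (pd μ P x)) s (pd μ P x)) * tpow k (P x))) = 0 := by
      intro t
      rw [← TNaux.sum_msum]
      rw [Finset.sum_congr rfl (fun s hs => claim2 t s hs)]
      simp
    rw [Finset.sum_congr rfl (fun t _ => this t)]
    simp
  refine ⟨part1, ?_⟩
  -- part 2 : conservation of the current
  have e : ∀ μ : Fin (n+1),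
      pd μ (fun y =>
          pd μ (fun y' => tpow k (P y')) y * tpow k (P y) -
            tpow k (P y) * pd μ (fun y' => tpow k (P y')) y) x
      = pd μ (pd μ (fun y' => tpow k (P y'))) x * tpow k (P x)
        - tpow k (P x) * pd μ (pd μ (fun y' => tpow k (P y'))) x := by
    intro μ
    have hpdQ : ContDiff ℝ (⊤:ℕ∞) (pd μ (fun y' => tpow k (P y'))) := TNaux.pd_contDiff hQ μ
    have h1 : ContDiff ℝ (⊤:ℕ∞) (fun y => pd μ (fun y' => tpow k (P y')) y * tpow k (P y)) :=
      TNaux.mul_contDiff hpdQ hQ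
    have h2 : ContDiff ℝ (⊤:ℕ∞) (fun y => tpow k (P y) * pd μ (fun y' => tpow k (P y')) y) :=
      TNaux.mul_contDiff hQ hpdQ
    rw [TNaux.pd_sub μ ((h1.differentiable (by simp)).differentiableAt)
      ((h2.differentiable (by simp)).differentiableAt)]
    rw [TNaux.pd_mul hpdQ hQ μ x, TNaux.pd_mul hQ hpdQ μ x]
    abel
  rw [TNaux.msum_congr e, TNaux.msum_sub, ← TNaux.msum_mul, ← TNaux.mul_msum]
  rw [sub_eq_zero] at part1 ⊢
  exact part1.symm
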